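/- Let v₁,…,v₁₁ ∈ ℝ³ be the columns of V = [[378^{1/6},0,0,√3,√3,0,0,√3,√3,√3,√3],[0,378^{1/6},0,0,0,√3,√3,√3,−√3,√3,−√3],[0,0,280^{1/6},2,−2,2,−2,1,1,−1,−1]]. Then (v_j) is an 11-point weighted spherical (3,3)-design for ℝ³: Σ_{j=1}^{11} Σ_{k=1}^{11} |⟨v_j,v_k⟩|⁶ = (1/7)·(Σ_{ℓ=1}^{11} ‖v_ℓ‖⁶)². -/
import Mathlib


open Real Matrix

/-- The `3×11` matrix of the Reznick `11`-point weighted spherical `(3,3)`-design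
for `ℝ³`. -/
noncomputable def V : Matrix (Fin 3) (Fin 11) ℝ :=
  !![(378 : ℝ) ^ ((1 : ℝ)/6), 0, 0, Real.sqrt 3, Real.sqrt 3, 0, 0,
       Real.sqrt 3, Real.sqrt 3, Real.sqrt 3, Real.sqrt 3;
     0, (378 : ℝ) ^ ((1 : ℝ)/6), 0, 0, 0, Real.sqrt 3, Real.sqrt 3,
       Real.sqrt 3, -Real.sqrt 3, Real.sqrt 3, -Real.sqrt 3;
     0, 0, (280 : ℝ) ^ ((1 : ℝ)/6), 2, -2, 2, -2, 1, 1, -1, -1]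

set_option maxHeartbeats 4000000 in
/-- The columns `v₁,…,v₁₁` of `V` form an `11`-point weighted spherical `(3,3)`-design
for `ℝ³`:  `Σ_j Σ_k |⟨v_j, v_k⟩|⁶ = (1/7)·(Σ_ℓ ‖v_ℓ‖⁶)²`. -/
theorem reznick_design :
    ∑ j : Fin 11, ∑ k : Fin 11, |∑ i : Fin 3, V i j * V i k| ^ 6 =
      (1/7 : ℝ) * (∑ l : Fin 11, (∑ i : Fin 3, V i l ^ 2) ^ 3) ^ 2 := by
  simp only [V, Fin.sum_univ_succ, Fin.sum_univ_zero, Matrix.cons_val', Matrix.cons_val_zero,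
    Matrix.cons_val_one, Matrix.head_cons, Matrix.empty_val', Matrix.cons_val_fin_one,
    Matrix.head_fin_const, Matrix.cons_val_succ, Matrix.of_apply, zero_mul, mul_zero,
    add_zero, zero_add, mul_one, one_mul, mul_neg, neg_mul, neg_neg]
  simp only [show ∀ x : ℝ, |x| ^ 6 = x ^ 6 from fun x => Even.pow_abs ⟨3, rfl⟩ x]
  set a : ℝ := (378 : ℝ) ^ ((1 : ℝ)/6) with ha'
  set b : ℝ := (280 : ℝ) ^ ((1 : ℝ)/6) with hb'
  set s : ℝ := Real.sqrt 3 with hs'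
  have ha6 : a ^ 6 = 378 := by
    rw [ha', ← Real.rpow_natCast ((378:ℝ) ^ ((1:ℝ)/6)) 6, ← Real.rpow_mul (by norm_num)]
    norm_num
  have hb6 : b ^ 6 = 280 := by
    rw [hb', ← Real.rpow_natCast ((280:ℝ) ^ ((1:ℝ)/6)) 6, ← Real.rpow_mul (by norm_num)]
    norm_num
  have hs2 : s ^ 2 = 3 := Real.sq_sqrt (by norm_num)
  have ha12 : a ^ 12 = 142884 := by nlinarith [ha6]
  have hb12 : b ^ 12 = 78400 := by nlinarith [hb6]
  have hs4 : s ^ 4 = 9 := by nlinarith [hs2]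
  have hs6 : s ^ 6 = 27 := by nlinarith [hs2]
  have hs8 : s ^ 8 = 81 := by nlinarith [hs2, hs4]
  have hs10 : s ^ 10 = 243 := by nlinarith [hs2, hs4]
  have hs12 : s ^ 12 = 729 := by nlinarith [hs6]
  ring_nf
  simp only [ha6, hb6, hs2, ha12, hb12, hs4, hs6, hs8, hs10, hs12]
  norm_num
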